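/- The weighted Gessel-type model with parameter λ is decoupled with G(y) = −(1+λt)/(t(1+y)): for every field k and all t, λ, x, y₀, y₁ ∈ k with t ≠ 0, y₀ ≠ −1, y₁ ≠ −1, if K(x,y₀) = 0 and K(x,y₁) = 0, where K(x,y) = t(x²y² + 2x²y + x² + λx + y + 1) − xy, then x(y₀ − y₁) = G(y₀) − G(y₁). -/

import Mathlib

/-- The weighted Gessel-type model with parameter `λ = lam` is decoupled with
`G(y) = -(1+λt)/(t(1+y))`: if `y₀, y₁` are two roots of the kernel `K(x,·) = 0`,
then `x(y₀ - y₁) = G(y₀) - G(y₁)`. -/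
theorem weighted_gessel_decoupled {k : Type*} [Field k] (t lam x y₀ y₁ : k)
    (ht : t ≠ 0) (hy₀ : y₀ ≠ -1) (hy₁ : y₁ ≠ -1)
    (hK₀ : t * (x ^ 2 * y₀ ^ 2 + 2 * x ^ 2 * y₀ + x ^ 2 + lam * x + y₀ + 1) - x * y₀ = 0)
    (hK₁ : t * (x ^ 2 * y₁ ^ 2 + 2 * x ^ 2 * y₁ + x ^ 2 + lam * x + y₁ + 1) - x * y₁ = 0) :
    x * (y₀ - y₁) =
      (-(1 + lam * t) / (t * (1 + y₀))) - (-(1 + lam * t) / (t * (1 + y₁))) := by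
  have hu₀ : (1 : k) + y₀ ≠ 0 := fun h => hy₀ (by linear_combination h)
  have hu₁ : (1 : k) + y₁ ≠ 0 := fun h => hy₁ (by linear_combination h)
  have hx : x ≠ 0 := by
    rintro rfl
    apply hu₀
    have : t * (1 + y₀) = 0 := by linear_combination hK₀
    exact (mul_eq_zero.mp this).resolve_left ht
  by_cases hne : y₀ = y₁
  · subst hne; ring
  · have hd : y₀ - y₁ ≠ 0 := sub_ne_zero.mpr hne
    have key : t * x * (1 + y₀) * (1 + y₁) = 1 + lam * t := by
      refine mul_right_cancel₀ (mul_ne_zero hx hd)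
        (show t * x * (1 + y₀) * (1 + y₁) * (x * (y₀ - y₁))
            = (1 + lam * t) * (x * (y₀ - y₁)) from ?_)
      linear_combination (1 + y₁) * hK₀ - (1 + y₀) * hK₁
    field_simp
    linear_combination (y₀ - y₁) * key
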